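/- Let n ≥ 5 and let G = ⟨a,b,r,s : r^{2^{n-3}} = s^2 = (sr)^2 = a^2 = b^2 = 1, [s,b]=[r,b]=1, ara = r^{-1}, asa = sr, aba = br^{2^{n-4}}⟩ of order 2^n. Then the map sending (γ_1, γ_2, γ_3, γ_4) ↦ (s, bs, a, ab) extends to a surjective homomorphism from the group ⟨γ_1,γ_2,γ_3,γ_4 : γ_1^2 = γ_2^2 = γ_3^2 = γ_4^4 = γ_1γ_2γ_3γ_4 = 1⟩ onto G; i.e., s, bs, a have order 2, ab has order 4, s·bs·a·ab = 1, and {s, bs, a, ab} generates G. -/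

import Mathlib

/-- Relators of the group G of order 2^n from Theorem 2. -/
def nilRels (n : ℕ) : Set (FreeGroup (Fin 4)) :=
  let a := FreeGroup.of (0 : Fin 4)
  let b := FreeGroup.of (1 : Fin 4)
  let r := FreeGroup.of (2 : Fin 4)
  let s := FreeGroup.of (3 : Fin 4)
  {r ^ 2 ^ (n - 3), s ^ 2, (s * r) ^ 2, a ^ 2, b ^ 2,
    s * b * s⁻¹ * b⁻¹, r * b * r⁻¹ * b⁻¹,
    a * r * a * r, a * s * a * (s * r)⁻¹, a * b * a * (b * r ^ 2 ^ (n - 4))⁻¹}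

/-- Relators of the Fuchsian group of signature (0; 2,2,2,4):
γ₁² = γ₂² = γ₃² = γ₄⁴ = γ₁γ₂γ₃γ₄ = 1. -/
def quadRels : Set (FreeGroup (Fin 4)) :=
  {FreeGroup.of (0 : Fin 4) ^ 2, FreeGroup.of (1 : Fin 4) ^ 2,
    FreeGroup.of (2 : Fin 4) ^ 2, FreeGroup.of (3 : Fin 4) ^ 4,
    FreeGroup.of (0 : Fin 4) * FreeGroup.of (1 : Fin 4) *
      FreeGroup.of (2 : Fin 4) * FreeGroup.of (3 : Fin 4)}


namespace SKE

open DihedralGroup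

variable {m : ℕ}

abbrev C2 := Multiplicative (ZMod 2)

abbrev D (m : ℕ) := DihedralGroup m × C2

/-- the automorphism θ₀ of the dihedral group: r ↦ r⁻¹, s ↦ sr. -/
def th0 : DihedralGroup m → DihedralGroup m
  | .r i => .r (-i)
  | .sr i => .sr (1 - i)

lemma th0_mul (x y : DihedralGroup m) : th0 (x * y) = th0 x * th0 y := by
  rcases x with i | i <;> rcases y with j | j <;> simp [th0] <;> ring_nf

lemma th0_th0 (x : DihedralGroup m) : th0 (th0 x) = x := by
  rcases x with i | i <;> simp [th0]

lemma th0_one : th0 (1 : DihedralGroup m) = 1 := by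
  simp [DihedralGroup.one_def, -DihedralGroup.r_zero, th0]

lemma neg_k (k : ZMod m) (hk : k + k = 0) : -k = k :=
  neg_eq_of_add_eq_zero_left hk

lemma central (k : ZMod m) (hk : k + k = 0) (x : DihedralGroup m) :
    Commute (DihedralGroup.r k) x := by
  rcases x with i | i
  · simp [Commute, SemiconjBy, add_comm]
  · show DihedralGroup.r k * _ = _
    rw [r_mul_sr, sr_mul_r, sub_eq_add_neg, neg_k k hk]

lemma c_sq (k : ZMod m) (hk : k + k = 0) :
    (DihedralGroup.r k : DihedralGroup m) * DihedralGroup.r k = 1 := by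
  simp [DihedralGroup.one_def, -DihedralGroup.r_zero, hk]

lemma th0_c (k : ZMod m) (hk : k + k = 0) :
    th0 (DihedralGroup.r k : DihedralGroup m) = DihedralGroup.r k := by
  simp only [th0]
  rw [neg_k k hk]

def thf (k : ZMod m) (x : D m) : D m :=
  (th0 x.1 * (DihedralGroup.r k) ^ (Multiplicative.toAdd x.2).val, x.2)

lemma zmod2_cases : ∀ t : ZMod 2, t = 0 ∨ t = 1 := by decide

lemma thf_thf (k : ZMod m) (hk : k + k = 0) (x : D m) : thf k (thf k x) = x := by
  obtain ⟨d, t⟩ := x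
  simp only [thf, th0_mul]
  rcases zmod2_cases (Multiplicative.toAdd t) with h | h <;>
    rw [h] <;>
    simp [th0_th0, th0_one, ZMod.val_one, th0_c k hk, mul_assoc, c_sq k hk]

lemma pow_val_add {M : Type*} [Monoid M] (c : M) (hc : c * c = 1) (t u : ZMod 2) :
    c ^ (t + u).val = c ^ t.val * c ^ u.val := by
  rcases zmod2_cases t with h | h <;> rcases zmod2_cases u with h' | h' <;>
    subst h <;> subst h' <;>
    simp [ZMod.val_one, show ((1 : ZMod 2) + 1) = 0 from rfl, hc]

lemma thf_mul (k : ZMod m) (hk : k + k = 0) (x y : D m) :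
    thf k (x * y) = thf k x * thf k y := by
  obtain ⟨d, t⟩ := x
  obtain ⟨e, u⟩ := y
  simp only [thf, Prod.mk_mul_mk, th0_mul]
  refine Prod.ext ?_ rfl
  have htu : Multiplicative.toAdd (t * u) = Multiplicative.toAdd t + Multiplicative.toAdd u :=
    rfl
  simp only [htu, pow_val_add _ (c_sq k hk), mul_assoc]
  congr 1
  rw [← mul_assoc, ← ((central k hk (th0 e)).pow_left _).eq, mul_assoc]

/-- θ as an automorphism of D m. -/
def theta (k : ZMod m) (hk : k + k = 0) : MulAut (D m) where
  toFun := thf k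
  invFun := thf k
  left_inv := thf_thf k hk
  right_inv := thf_thf k hk
  map_mul' := thf_mul k hk

lemma theta_sq (k : ZMod m) (hk : k + k = 0) : theta k hk * theta k hk = 1 :=
  MulEquiv.ext (thf_thf k hk)

/-- the action of C2 on D m. -/
def phi (k : ZMod m) (hk : k + k = 0) : C2 →* MulAut (D m) :=
  MonoidHom.mk' (fun t => theta k hk ^ (Multiplicative.toAdd t).val)
    (fun t u => pow_val_add _ (theta_sq k hk) (Multiplicative.toAdd t) (Multiplicative.toAdd u))

abbrev H (m : ℕ) (k : ZMod m) (hk : k + k = 0) := D m ⋊[phi k hk] C2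


section
open DihedralGroup SemidirectProduct
variable {m : ℕ} (k : ZMod m) (hk : k + k = 0)

def gg : C2 := Multiplicative.ofAdd 1

@[simp] lemma inv_r (i : ZMod m) : (DihedralGroup.r i)⁻¹ = DihedralGroup.r (-i) := rfl
@[simp] lemma inv_sr (i : ZMod m) : (DihedralGroup.sr i)⁻¹ = DihedralGroup.sr i := rfl
@[simp] lemma thf_one : thf k (1 : D m) = 1 := by
  simp [thf, th0_one]

def A : H m k hk := ⟨1, gg⟩
def B : H m k hk := ⟨(1, gg), 1⟩
def R : H m k hk := ⟨(.r 1, 1), 1⟩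
def S : H m k hk := ⟨(.sr 0, 1), 1⟩

@[simp] lemma toAdd_gg : (Multiplicative.toAdd gg).val = 1 := rfl
@[simp] lemma toAdd_one' : (Multiplicative.toAdd (1 : C2)).val = 0 := rfl
@[simp] lemma gg_mul_gg : gg * gg = 1 := by decide
@[simp] lemma gg_inv : gg⁻¹ = gg := by decide

@[simp] lemma phi_one_apply (d : D m) : phi k hk 1 d = d := by
  simp [phi]

@[simp] lemma phi_gg_apply (d : D m) : phi k hk gg d = thf k d := by
  simp only [phi, MonoidHom.mk'_apply, toAdd_gg, pow_one]
  rfl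

lemma relR (p : ℕ) : (R k hk) ^ p = ⟨(.r (p : ZMod m), 1), 1⟩ := by
  induction p with
  | zero => ext <;> simp [R, DihedralGroup.one_def, -DihedralGroup.r_zero]
  | succ p ih =>
      rw [pow_succ, ih]
      ext <;> simp [R, thf, th0] <;> push_cast <;> ring

lemma relS2 : S k hk * S k hk = 1 := by
  ext <;> simp [S, DihedralGroup.one_def, -DihedralGroup.r_zero]

lemma relSR2 : (S k hk * R k hk) * (S k hk * R k hk) = 1 := by
  ext <;> simp [S, R, DihedralGroup.one_def, -DihedralGroup.r_zero]

lemma relA2 : A k hk * A k hk = 1 := by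
  ext <;> simp [A]

lemma relB2 : B k hk * B k hk = 1 := by
  ext <;> simp [B, DihedralGroup.one_def, -DihedralGroup.r_zero]

lemma rel6 : S k hk * B k hk * (S k hk)⁻¹ * (B k hk)⁻¹ = 1 := by
  ext <;> simp [S, B, DihedralGroup.one_def, -DihedralGroup.r_zero]

lemma rel7 : R k hk * B k hk * (R k hk)⁻¹ * (B k hk)⁻¹ = 1 := by
  ext <;> simp [R, B, DihedralGroup.one_def, -DihedralGroup.r_zero]

lemma rel8 : A k hk * R k hk * A k hk * R k hk = 1 := by
  ext <;> simp [A, R, thf, th0, DihedralGroup.one_def, -DihedralGroup.r_zero]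

lemma rel9 : A k hk * S k hk * A k hk * ((S k hk) * R k hk)⁻¹ = 1 := by
  ext <;> simp [A, S, R, thf, th0, DihedralGroup.one_def, -DihedralGroup.r_zero]

lemma rel10 (p : ℕ) (hp : (p : ZMod m) = k) :
    A k hk * B k hk * A k hk * ((B k hk) * (R k hk) ^ p)⁻¹ = 1 := by
  rw [relR]
  ext <;> simp [A, B, thf, th0, DihedralGroup.one_def, -DihedralGroup.r_zero, hp]

end
section
open DihedralGroup
variable {m : ℕ} (k : ZMod m) (hk : k + k = 0)

lemma S_ne_one : S k hk ≠ 1 := by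
  intro h
  have := congrArg (fun x : H m k hk => x.left.1) h
  simp [S, DihedralGroup.one_def, -DihedralGroup.r_zero] at this

lemma BS_ne_one : B k hk * S k hk ≠ 1 := by
  intro h
  have := congrArg (fun x : H m k hk => x.left.1) h
  simp [S, B, DihedralGroup.one_def, -DihedralGroup.r_zero] at this

lemma A_ne_one : A k hk ≠ 1 := by
  intro h
  have := congrArg (fun x : H m k hk => x.right) h
  simp [A, gg] at this

lemma Rpow_ne_one (p : ℕ) (hp : (p : ZMod m) ≠ 0) : (R k hk) ^ p ≠ 1 := by
  rw [relR]
  intro h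
  have := congrArg (fun x : H m k hk => x.left.1) h
  simp only [DihedralGroup.one_def] at this
  exact hp (by injection this)

end
section
open DihedralGroup

variable (n : ℕ)

def kk : ZMod (2 ^ (n - 3)) := ((2 ^ (n - 4) : ℕ) : ZMod (2 ^ (n - 3)))

lemma pow_split (hn : 5 ≤ n) : 2 ^ (n - 4) + 2 ^ (n - 4) = 2 ^ (n - 3) := by
  have h : n - 3 = (n - 4) + 1 := by omega
  rw [h, pow_succ]; ring

lemma hkk (hn : 5 ≤ n) : kk n + kk n = 0 := by
  have hn4 : (4:ℕ) ≤ n := by omega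
  have : kk n + kk n = ((2 ^ (n - 4) + 2 ^ (n - 4) : ℕ) : ZMod (2 ^ (n - 3))) := by
    push_cast [kk]; ring
  rw [this, pow_split n hn, ZMod.natCast_self]

lemma kk_ne_zero (hn : 5 ≤ n) : kk n ≠ 0 := by
  rw [kk, Ne, ZMod.natCast_eq_zero_iff]
  intro h
  have h1 := Nat.le_of_dvd (by positivity) h
  have h2 : 2 ^ (n - 4) < 2 ^ (n - 3) :=
    Nat.pow_lt_pow_right (by norm_num) (by omega)
  exact absurd h1 (by omega)

def gens (hn : 5 ≤ n) : Fin 4 → H (2 ^ (n - 3)) (kk n) (hkk n hn)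
  | 0 => A (kk n) (hkk n hn)
  | 1 => B (kk n) (hkk n hn)
  | 2 => R (kk n) (hkk n hn)
  | 3 => S (kk n) (hkk n hn)

lemma lift_rels (hn : 5 ≤ n) : ∀ w ∈ nilRels n, FreeGroup.lift (gens n hn) w = 1 := by
  intro w hw
  simp only [nilRels, Set.mem_insert_iff, Set.mem_singleton_iff] at hw
  have e0 : FreeGroup.lift (gens n hn) (FreeGroup.of 0) = A (kk n) (hkk n hn) :=
    FreeGroup.lift_apply_of
  have e1 : FreeGroup.lift (gens n hn) (FreeGroup.of 1) = B (kk n) (hkk n hn) :=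
    FreeGroup.lift_apply_of
  have e2 : FreeGroup.lift (gens n hn) (FreeGroup.of 2) = R (kk n) (hkk n hn) :=
    FreeGroup.lift_apply_of
  have e3 : FreeGroup.lift (gens n hn) (FreeGroup.of 3) = S (kk n) (hkk n hn) :=
    FreeGroup.lift_apply_of
  rcases hw with rfl | rfl | rfl | rfl | rfl | rfl | rfl | rfl | rfl | rfl <;>
    simp only [map_mul, map_pow, map_inv, e0, e1, e2, e3, pow_two]
  · rw [relR]
    ext <;> simp [ZMod.natCast_self, DihedralGroup.one_def, -DihedralGroup.r_zero]
  · exact relS2 _ _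
  · exact relSR2 _ _
  · exact relA2 _ _
  · exact relB2 _ _
  · exact rel6 _ _
  · exact rel7 _ _
  · exact rel8 _ _
  · exact rel9 _ _
  · exact rel10 _ _ _ rfl

end
end SKE

section
variable (n : ℕ)
private abbrev fa : FreeGroup (Fin 4) := FreeGroup.of 0
private abbrev fb : FreeGroup (Fin 4) := FreeGroup.of 1
private abbrev fr : FreeGroup (Fin 4) := FreeGroup.of 2
private abbrev fs : FreeGroup (Fin 4) := FreeGroup.of 3

lemma mem1 : fr ^ 2 ^ (n - 3) ∈ nilRels n := Set.mem_insert _ _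
lemma mem2 : fs ^ 2 ∈ nilRels n := Set.mem_insert_of_mem _ (Set.mem_insert _ _)
lemma mem3 : (fs * fr) ^ 2 ∈ nilRels n :=
  Set.mem_insert_of_mem _ (Set.mem_insert_of_mem _ (Set.mem_insert _ _))
lemma mem4 : fa ^ 2 ∈ nilRels n :=
  Set.mem_insert_of_mem _ (Set.mem_insert_of_mem _ (Set.mem_insert_of_mem _
    (Set.mem_insert _ _)))
lemma mem5 : fb ^ 2 ∈ nilRels n :=
  Set.mem_insert_of_mem _ (Set.mem_insert_of_mem _ (Set.mem_insert_of_mem _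
    (Set.mem_insert_of_mem _ (Set.mem_insert _ _))))
lemma mem6 : fs * fb * fs⁻¹ * fb⁻¹ ∈ nilRels n :=
  Set.mem_insert_of_mem _ (Set.mem_insert_of_mem _ (Set.mem_insert_of_mem _
    (Set.mem_insert_of_mem _ (Set.mem_insert_of_mem _ (Set.mem_insert _ _)))))
lemma mem7 : fr * fb * fr⁻¹ * fb⁻¹ ∈ nilRels n :=
  Set.mem_insert_of_mem _ (Set.mem_insert_of_mem _ (Set.mem_insert_of_mem _
    (Set.mem_insert_of_mem _ (Set.mem_insert_of_mem _ (Set.mem_insert_of_mem _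
    (Set.mem_insert _ _))))))
lemma mem8 : fa * fr * fa * fr ∈ nilRels n :=
  Set.mem_insert_of_mem _ (Set.mem_insert_of_mem _ (Set.mem_insert_of_mem _
    (Set.mem_insert_of_mem _ (Set.mem_insert_of_mem _ (Set.mem_insert_of_mem _
    (Set.mem_insert_of_mem _ (Set.mem_insert _ _)))))))
lemma mem9 : fa * fs * fa * (fs * fr)⁻¹ ∈ nilRels n :=
  Set.mem_insert_of_mem _ (Set.mem_insert_of_mem _ (Set.mem_insert_of_mem _
    (Set.mem_insert_of_mem _ (Set.mem_insert_of_mem _ (Set.mem_insert_of_mem _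
    (Set.mem_insert_of_mem _ (Set.mem_insert_of_mem _ (Set.mem_insert _ _))))))))
lemma mem10 : fa * fb * fa * (fb * fr ^ 2 ^ (n - 4))⁻¹ ∈ nilRels n :=
  Set.mem_insert_of_mem _ (Set.mem_insert_of_mem _ (Set.mem_insert_of_mem _
    (Set.mem_insert_of_mem _ (Set.mem_insert_of_mem _ (Set.mem_insert_of_mem _
    (Set.mem_insert_of_mem _ (Set.mem_insert_of_mem _ (Set.mem_insert_of_mem _
    rfl))))))))
end

/-- (γ₁,γ₂,γ₃,γ₄) ↦ (s, bs, a, ab) extends to a surjective homomorphism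
from the (0;2,2,2,4)-presented group onto G: s, bs, a have order 2, ab has order 4,
s·bs·a·ab = 1, and {s, bs, a, ab} generates G. -/
theorem surface_kernel_epimorphism (n : ℕ) (hn : 5 ≤ n) :
    letI G := PresentedGroup (nilRels n)
    let a : G := PresentedGroup.of 0
    let b : G := PresentedGroup.of 1
    let s : G := PresentedGroup.of 3
    orderOf s = 2 ∧ orderOf (b * s) = 2 ∧ orderOf a = 2 ∧ orderOf (a * b) = 4 ∧
      s * (b * s) * a * (a * b) = 1 ∧
      Subgroup.closure {s, b * s, a, a * b} = (⊤ : Subgroup G) ∧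
      ∃ f : PresentedGroup quadRels →* G, Function.Surjective f ∧
        f (PresentedGroup.of 0) = s ∧ f (PresentedGroup.of 1) = b * s ∧
        f (PresentedGroup.of 2) = a ∧ f (PresentedGroup.of 3) = a * b := by
  intro a b s
  set r : PresentedGroup (nilRels n) := PresentedGroup.of 2 with hr
  have mk_rel : ∀ w ∈ nilRels n, PresentedGroup.mk (nilRels n) w = 1 := fun w hw =>
    (QuotientGroup.eq_one_iff w).mpr (Subgroup.subset_normalClosure hw)
  -- relations in PresentedGroup (nilRels n)
  have hrM : r ^ 2 ^ (n - 3) = 1 := by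
    have h := mk_rel _ (mem1 n)
    rw [map_pow] at h
    exact h
  have hs2 : s * s = 1 := by
    have h := mk_rel _ (mem2 n)
    rw [map_pow, pow_two] at h
    exact h
  have ha2 : a * a = 1 := by
    have h := mk_rel _ (mem4 n)
    rw [map_pow, pow_two] at h
    exact h
  have hb2 : b * b = 1 := by
    have h := mk_rel _ (mem5 n)
    rw [map_pow, pow_two] at h
    exact h
  have hsb : s * b = b * s := by
    have h := mk_rel _ (mem6 n)
    simp only [map_mul, map_inv] at h
    exact mul_inv_eq_iff_eq_mul.mp (mul_inv_eq_one.mp h)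
  have hrb : r * b = b * r := by
    have h := mk_rel _ (mem7 n)
    simp only [map_mul, map_inv] at h
    exact mul_inv_eq_iff_eq_mul.mp (mul_inv_eq_one.mp h)
  have hasa : a * s * a = s * r := by
    have h := mk_rel _ (mem9 n)
    simp only [map_mul, map_inv] at h
    exact mul_inv_eq_one.mp h
  have haba : a * b * a = b * r ^ 2 ^ (n - 4) := by
    have h := mk_rel _ (mem10 n)
    simp only [map_mul, map_inv, map_pow] at h
    exact mul_inv_eq_one.mp h
  -- derived identities
  have hbs2 : b * s * (b * s) = 1 := by
    rw [show b * s * (b * s) = b * (s * b) * s by group, hsb,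
      show b * (b * s) * s = b * b * (s * s) by group, hb2, hs2, one_mul]
  have hab2 : a * b * (a * b) = r ^ 2 ^ (n - 4) := by
    have hcomm : r ^ 2 ^ (n - 4) * b = b * r ^ 2 ^ (n - 4) :=
      ((show Commute r b from hrb).pow_left _).eq
    calc a * b * (a * b) = a * b * a * b := by group
      _ = b * r ^ 2 ^ (n - 4) * b := by rw [haba]
      _ = b * (b * r ^ 2 ^ (n - 4)) := by rw [mul_assoc, hcomm]
      _ = b * b * r ^ 2 ^ (n - 4) := by rw [mul_assoc]
      _ = r ^ 2 ^ (n - 4) := by rw [hb2, one_mul]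
  have hab4 : (a * b) ^ 4 = 1 := by
    have h44 : (a * b) ^ 4 = ((a * b) ^ 2) ^ 2 := by rw [← pow_mul]
    rw [h44, pow_two, pow_two, hab2, ← pow_add, SKE.pow_split n hn, hrM]
  -- the homomorphism to H
  let Φ : PresentedGroup (nilRels n) →* SKE.H (2 ^ (n - 3)) (SKE.kk n) (SKE.hkk n hn) :=
    PresentedGroup.toGroup (SKE.lift_rels n hn)
  have Φa : Φ a = SKE.A (SKE.kk n) (SKE.hkk n hn) := PresentedGroup.toGroup.of _
  have Φb : Φ b = SKE.B (SKE.kk n) (SKE.hkk n hn) := PresentedGroup.toGroup.of _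
  have Φr : Φ r = SKE.R (SKE.kk n) (SKE.hkk n hn) := PresentedGroup.toGroup.of _
  have Φs : Φ s = SKE.S (SKE.kk n) (SKE.hkk n hn) := PresentedGroup.toGroup.of _
  have hs_ne : s ≠ 1 := fun h => SKE.S_ne_one _ _ (by rw [← Φs, h, map_one])
  have hbs_ne : b * s ≠ 1 := fun h =>
    SKE.BS_ne_one _ _ (by rw [← Φb, ← Φs, ← map_mul, h, map_one])
  have ha_ne : a ≠ 1 := fun h => SKE.A_ne_one _ _ (by rw [← Φa, h, map_one])
  have hrq_ne : r ^ 2 ^ (n - 4) ≠ 1 := fun h =>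
    SKE.Rpow_ne_one _ _ _ (SKE.kk_ne_zero n hn) (by rw [← Φr, ← map_pow, h, map_one])
  have oS : orderOf s = 2 := orderOf_eq_prime (by rw [pow_two]; exact hs2) hs_ne
  have oBS : orderOf (b * s) = 2 := orderOf_eq_prime (by rw [pow_two]; exact hbs2) hbs_ne
  have oA : orderOf a = 2 := orderOf_eq_prime (by rw [pow_two]; exact ha2) ha_ne
  have oAB : orderOf (a * b) = 4 := by
    have h4 : orderOf (a * b) = 2 ^ 2 :=
      orderOf_eq_prime_pow (n := 1)
        (by rw [pow_one, pow_two, hab2]; exact hrq_ne) (by norm_num; exact hab4)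
    simpa using h4
  have hprod : s * (b * s) * a * (a * b) = 1 := by
    rw [show s * (b * s) * a * (a * b) = s * b * s * (a * a) * b by group, ha2, mul_one,
      show s * b * s * b = s * b * (s * b) by group, hsb, hbs2]
  have hclos : Subgroup.closure {s, b * s, a, a * b} = (⊤ : Subgroup (PresentedGroup (nilRels n))) := by
    rw [eq_top_iff, ← PresentedGroup.closure_range_of (nilRels n)]
    apply (Subgroup.closure_le _).mpr
    rintro x ⟨i, rfl⟩
    have hmem : ∀ y ∈ ({s, b * s, a, a * b} : Set (PresentedGroup (nilRels n))), y ∈ Subgroup.closure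
        ({s, b * s, a, a * b} : Set (PresentedGroup (nilRels n))) := fun y hy => Subgroup.subset_closure hy
    have hsmem := hmem s (by simp)
    have hbsmem := hmem (b * s) (by simp)
    have hamem := hmem a (by simp)
    match i with
    | 0 => exact hamem
    | 1 =>
      have hb1 : (PresentedGroup.of 1 : PresentedGroup (nilRels n)) = b * s * s := by
        show b = b * s * s
        rw [mul_assoc, hs2, mul_one]
      rw [hb1]
      exact mul_mem hbsmem hsmem
    | 2 =>
      have hr1 : (PresentedGroup.of 2 : PresentedGroup (nilRels n)) = s * (a * s * a) := by
        show r = s * (a * s * a)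
        rw [hasa, ← mul_assoc, hs2, one_mul]
      rw [hr1]
      exact mul_mem hsmem (mul_mem (mul_mem hamem hsmem) hamem)
    | 3 => exact hsmem
  refine ⟨oS, oBS, oA, oAB, hprod, hclos, ?_⟩
  -- the epimorphism
  have hquad : ∀ w ∈ quadRels,
      FreeGroup.lift (fun i : Fin 4 => ((![s, b * s, a, a * b]) i : PresentedGroup (nilRels n))) w = 1 := by
    intro w hw
    simp only [quadRels, Set.mem_insert_iff, Set.mem_singleton_iff] at hw
    rcases hw with rfl | rfl | rfl | rfl | rfl <;>
      simp only [map_mul, map_pow, FreeGroup.lift_apply_of, Matrix.cons_val_zero,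
        Matrix.cons_val_one, Matrix.head_cons, Matrix.cons_val_two, Matrix.tail_cons,
        Matrix.cons_val_three]
    · rw [pow_two]; exact hs2
    · rw [pow_two]; exact hbs2
    · rw [pow_two]; exact ha2
    · exact hab4
    · exact hprod
  refine ⟨PresentedGroup.toGroup hquad, ?_, PresentedGroup.toGroup.of _,
    PresentedGroup.toGroup.of _, PresentedGroup.toGroup.of _, PresentedGroup.toGroup.of _⟩
  rw [← MonoidHom.range_eq_top, eq_top_iff, ← hclos]
  apply (Subgroup.closure_le _).mpr
  intro x hx
  simp only [Set.mem_insert_iff, Set.mem_singleton_iff] at hx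
  rcases hx with rfl | rfl | rfl | rfl
  · exact ⟨PresentedGroup.of 0, PresentedGroup.toGroup.of _⟩
  · exact ⟨PresentedGroup.of 1, PresentedGroup.toGroup.of _⟩
  · exact ⟨PresentedGroup.of 2, PresentedGroup.toGroup.of _⟩
  · exact ⟨PresentedGroup.of 3, PresentedGroup.toGroup.of _⟩
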